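/- Let n ≥ 1, let c, d : ℝ → ℝ³ be differentiable curves and Λ, M ∈ ℝ constants with Λ ≠ M, such that c(u) + ((Λ − u)/n)·c'(u) = d(u) + ((M − u)/n)·d'(u) for all u. Define r(u) = c(u) + ((u − M)/(Λ − M))·(d(u) − c(u)). Then for all u, c(u) = r(u) + ((M − u)/(n+1))·r'(u) and d(u) = r(u) + ((Λ − u)/(n+1))·r'(u). In particular, both boundary curves c and d lie on the tangent surface of the curve r, so the developable patch with constant Λ, M is a patch of the tangent surface to its edge of regression r; if moreover c and d are polynomial of degree at most n, then r is polynomial of degree at most n+1. -/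
import Mathlib


/-- A curve `ℝ → ℝ³` is polynomial of degree at most `n` if each of its
components is given by a polynomial of degree at most `n`. -/
def IsPolyDegLE (n : ℕ) (c : ℝ → Fin 3 → ℝ) : Prop :=
  ∀ i, ∃ p : Polynomial ℝ, p.natDegree ≤ n ∧ ∀ u, c u i = p.eval u

/-- for a developable patch with constant `Λ ≠ M` and edge of
regression `r(u) = c(u) + ((u−M)/(Λ−M))·(d(u)−c(u))`, the boundary curves
satisfy `c(u) = r(u) + ((M−u)/(n+1))·r'(u)` and `d(u) = r(u) + ((Λ−u)/(n+1))·r'(u)`,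
so they lie on the tangent surface of `r`; moreover, if `c` and `d` are
polynomial of degree at most `n`, then `r` is polynomial of degree at most `n+1`. -/
theorem constant_case_is_tangent_surface
    (n : ℕ) (hn : 1 ≤ n) (c d : ℝ → Fin 3 → ℝ)
    (hc : Differentiable ℝ c) (hd : Differentiable ℝ d)
    (Λ M : ℝ) (hΛM : Λ ≠ M)
    (hdev : ∀ u, c u + ((Λ - u) / (n : ℝ)) • deriv c u
               = d u + ((M - u) / (n : ℝ)) • deriv d u)
    (r : ℝ → Fin 3 → ℝ)
    (hr : ∀ u, r u = c u + ((u - M) / (Λ - M)) • (d u - c u)) :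
    (∀ u, c u = r u + ((M - u) / ((n : ℝ) + 1)) • deriv r u
        ∧ d u = r u + ((Λ - u) / ((n : ℝ) + 1)) • deriv r u) ∧
    (IsPolyDegLE n c → IsPolyDegLE n d → IsPolyDegLE (n + 1) r) := by
  have hL : Λ - M ≠ 0 := sub_ne_zero.mpr hΛM
  have hn0 : (n : ℝ) ≠ 0 := by positivity
  have hn1 : (n : ℝ) + 1 ≠ 0 := by positivity
  have hrfun : r = fun u => c u + ((u - M) / (Λ - M)) • (d u - c u) := funext hr
  constructor
  · intro u
    -- derivative of r
    have hφ : HasDerivAt (fun x : ℝ => (x - M) / (Λ - M)) (1 / (Λ - M)) u :=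
      ((hasDerivAt_id u).sub_const M).div_const (Λ - M)
    have hdc : HasDerivAt (fun x => d x - c x) (deriv d u - deriv c u) u :=
      (hd.differentiableAt.hasDerivAt).sub (hc.differentiableAt.hasDerivAt)
    have hR : HasDerivAt r
        (deriv c u + (((u - M) / (Λ - M)) • (deriv d u - deriv c u)
          + (1 / (Λ - M)) • (d u - c u))) u := by
      rw [hrfun]
      exact (hc.differentiableAt.hasDerivAt).add (hφ.smul hdc)
    have hR' : deriv r u = deriv c u + (((u - M) / (Λ - M)) • (deriv d u - deriv c u)
          + (1 / (Λ - M)) • (d u - c u)) := hR.deriv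
    have hdu : ∀ i, d u i = c u i + ((Λ - u) / (n : ℝ)) * deriv c u i
        - ((M - u) / (n : ℝ)) * deriv d u i := by
      intro i
      have h := congrFun (hdev u) i
      simp only [Pi.add_apply, Pi.smul_apply, smul_eq_mul] at h
      linarith
    constructor <;>
    · funext i
      simp only [hR', hr u, Pi.add_apply, Pi.smul_apply, Pi.sub_apply, smul_eq_mul]
      rw [hdu i]
      field_simp
      ring
  · intro hcp hdp i
    obtain ⟨p, hp, hpe⟩ := hcp i
    obtain ⟨q, hq, hqe⟩ := hdp i
    refine ⟨p + Polynomial.C ((Λ - M)⁻¹) * (Polynomial.X - Polynomial.C M) * (q - p),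
      ?_, ?_⟩
    · apply le_trans (Polynomial.natDegree_add_le _ _)
      apply max_le (le_trans hp (Nat.le_succ n))
      apply le_trans (Polynomial.natDegree_mul_le)
      apply le_trans (add_le_add (Polynomial.natDegree_mul_le)
        (le_trans (Polynomial.natDegree_sub_le _ _) (max_le hq hp)))
      have h1 : (Polynomial.C ((Λ - M)⁻¹)).natDegree = 0 := Polynomial.natDegree_C _
      have h2 : (Polynomial.X - Polynomial.C M : Polynomial ℝ).natDegree ≤ 1 :=
        le_trans (Polynomial.natDegree_sub_le _ _) (by
          simp [Polynomial.natDegree_X, Polynomial.natDegree_C])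
      omega
    · intro u
      have := hr u
      have h := congrFun this i
      simp only [Pi.add_apply, Pi.smul_apply, Pi.sub_apply, smul_eq_mul] at h
      rw [h, hpe u, hqe u]
      simp only [Polynomial.eval_add, Polynomial.eval_mul, Polynomial.eval_C,
        Polynomial.eval_sub, Polynomial.eval_X]
      field_simp
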